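/- Let n ≥ 1 be an integer, T > 0, β > 0. Let (p_j) be a sequence of real numbers with p_j > 1 and p_j → ∞, and let (λ_j) be real numbers with λ_j < 0 and (−λ_j)^{1/p_j} → β. Let u_j : [0, T] → [0, ∞) be continuous functions converging uniformly on [0, T] to a function u. Then for every t ∈ (0, T], ( (−λ_j) ∫₀^t u_j(s)^{p_j−1} s^{n−1} ds )^{1/(p_j−1)} → β · max_{s ∈ [0,t]} u(s) as j → ∞. -/

import Mathlib

open scoped Topology
open Filter

private lemma rpow_expand (x y c q : ℝ) (hx : 0 ≤ x) (hy : 0 ≤ y) (hc : 0 ≤ c) (hq : q ≠ 0) :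
    (x * (y ^ q * c)) ^ (1/q) = x ^ (1/q) * (y * c ^ (1/q)) := by
  rw [Real.mul_rpow hx (mul_nonneg (Real.rpow_nonneg hy _) hc),
      Real.mul_rpow (Real.rpow_nonneg hy _) hc, ← Real.rpow_mul hy,
      mul_one_div_cancel hq, Real.rpow_one]


/-- for uniformly convergent nonnegative continuous `u_j` on `[0,T]` and
`(-λ_j)^{1/p_j} → β`, for every `t ∈ (0,T]` one has
`((-λ_j) ∫₀ᵗ u_j(s)^{p_j-1} s^{n-1} ds)^{1/(p_j-1)} → β · max_{[0,t]} u`. -/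
theorem radial_integral_limit (n : ℕ) (hn : 1 ≤ n) (T β : ℝ) (hT : 0 < T) (hβ : 0 < β)
    (p lam : ℕ → ℝ) (hp : ∀ j, 1 < p j) (hptop : Tendsto p atTop atTop)
    (hlam : ∀ j, lam j < 0)
    (hlim : Tendsto (fun j => (-lam j) ^ (1 / p j)) atTop (𝓝 β))
    (uj : ℕ → ℝ → ℝ) (hujc : ∀ j, ContinuousOn (uj j) (Set.Icc 0 T))
    (hujnn : ∀ j, ∀ s ∈ Set.Icc (0:ℝ) T, 0 ≤ uj j s)
    (u : ℝ → ℝ) (hconv : TendstoUniformlyOn uj u atTop (Set.Icc 0 T)) :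
    ∀ t ∈ Set.Ioc (0:ℝ) T,
      Tendsto (fun j =>
          ((-lam j) * ∫ s in (0:ℝ)..t, uj j s ^ (p j - 1) * s ^ (n - 1)) ^ (1 / (p j - 1)))
        atTop (𝓝 (β * sSup (u '' Set.Icc 0 t))) := by
  intro t ht
  obtain ⟨ht0, htT⟩ := ht
  have hsub : Set.Icc (0:ℝ) t ⊆ Set.Icc 0 T := Set.Icc_subset_Icc le_rfl htT
  have hpe : ∀ j, (0:ℝ) < p j - 1 := fun j => sub_pos.2 (hp j)
  have hpne : ∀ j, p j - 1 ≠ 0 := fun j => (hpe j).ne'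
  have hlamp : ∀ j, (0:ℝ) < -lam j := fun j => neg_pos.2 (hlam j)
  -- limit of exponents
  have he : Tendsto (fun j => 1 / (p j - 1)) atTop (𝓝 0) := by
    simp only [one_div]
    exact (tendsto_atTop_add_const_right atTop (-1) hptop).inv_tendsto_atTop
  have he0 : ∀ j, 0 ≤ 1 / (p j - 1) := fun j => (one_div_pos.2 (hpe j)).le
  -- (-lam j) ^ (1/(p j - 1)) → β
  have hlam2 : Tendsto (fun j => (-lam j) ^ (1 / (p j - 1))) atTop (𝓝 β) := by
    have hratio : Tendsto (fun j => p j * (1 / (p j - 1))) atTop (𝓝 1) := by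
      have heq : ∀ j, p j * (1 / (p j - 1)) = 1 + 1 / (p j - 1) := by
        intro j
        have h1 : p j - 1 ≠ 0 := hpne j
        field_simp; ring
      simp only [heq]
      simpa using tendsto_const_nhds.add he
    have key := hlim.rpow hratio (Or.inl hβ.ne')
    rw [Real.rpow_one] at key
    convert key using 2 with j
    rw [← Real.rpow_mul (hlamp j).le, one_div (p j),
      inv_mul_cancel_left₀ (by have := hp j; intro h; nlinarith : p j ≠ 0)]
  have hcone : ∀ c : ℝ, 0 < c → Tendsto (fun j => c ^ (1 / (p j - 1))) atTop (𝓝 1) := by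
    intro c hc
    simpa using (tendsto_const_nhds : Tendsto (fun _ : ℕ => c) atTop (𝓝 c)).rpow
      he (Or.inl hc.ne')
  -- facts about u
  have hucT : ContinuousOn u (Set.Icc 0 T) :=
    hconv.continuousOn (Eventually.of_forall hujc).frequently
  have huc : ContinuousOn u (Set.Icc 0 t) := hucT.mono hsub
  obtain ⟨s₀, hs₀mem, hs₀max⟩ :=
    isCompact_Icc.exists_isMaxOn (Set.nonempty_Icc.2 ht0.le) huc
  set M := sSup (u '' Set.Icc 0 t) with hMdef
  have hM : M = u s₀ :=
    IsGreatest.csSup_eq ⟨Set.mem_image_of_mem _ hs₀mem, by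
      rintro _ ⟨s, hs, rfl⟩; exact hs₀max hs⟩
  have hub : ∀ s ∈ Set.Icc (0:ℝ) t, u s ≤ M := fun s hs => hM ▸ hs₀max hs
  have hunn : ∀ s ∈ Set.Icc (0:ℝ) T, 0 ≤ u s := by
    intro s hs
    exact ge_of_tendsto (hconv.tendsto_at hs) (Eventually.of_forall fun j => hujnn j s hs)
  have hM0 : 0 ≤ M := hM ▸ hunn s₀ (hsub hs₀mem)
  -- integrability
  have hint : ∀ j, IntervalIntegrable (fun s => uj j s ^ (p j - 1) * s ^ (n - 1))
      MeasureTheory.volume 0 t := by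
    intro j
    apply ContinuousOn.intervalIntegrable
    rw [Set.uIcc_of_le ht0.le]
    exact (((hujc j).mono hsub).rpow_const (fun x _ => Or.inr (hpe j).le)).mul
      (continuousOn_pow _)
  have hintnn : ∀ j, ∀ s ∈ Set.Icc (0:ℝ) t, 0 ≤ uj j s ^ (p j - 1) * s ^ (n - 1) := by
    intro j s hs
    exact mul_nonneg (Real.rpow_nonneg (hujnn j s (hsub hs)) _) (pow_nonneg hs.1 _)
  have haj : ∀ j, 0 ≤ ∫ s in (0:ℝ)..t, uj j s ^ (p j - 1) * s ^ (n - 1) := fun j =>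
    intervalIntegral.integral_nonneg ht0.le (hintnn j)
  have hA : ∀ j, 0 ≤ (-lam j) * ∫ s in (0:ℝ)..t, uj j s ^ (p j - 1) * s ^ (n - 1) :=
    fun j => mul_nonneg (hlamp j).le (haj j)
  have hxnn : ∀ j, 0 ≤ ((-lam j) * ∫ s in (0:ℝ)..t,
      uj j s ^ (p j - 1) * s ^ (n - 1)) ^ (1 / (p j - 1)) :=
    fun j => Real.rpow_nonneg (hA j) _
  set C := ∫ s in (0:ℝ)..t, s ^ (n - 1) with hCdef
  have hC : 0 < C := by
    apply intervalIntegral.intervalIntegral_pos_of_pos_on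
    · exact (continuous_pow _).intervalIntegrable _ _
    · intro x hx; exact pow_pos hx.1 _
    · exact ht0
  rw [Metric.tendstoUniformlyOn_iff] at hconv
  refine tendsto_order.2 ⟨fun a ha => ?_, fun b hb => ?_⟩
  · -- lower bound: a < β * M
    rcases lt_or_ge a 0 with ha0 | ha0
    · exact Eventually.of_forall fun j => lt_of_lt_of_le ha0 (hxnn j)
    have hMpos : 0 < M := by nlinarith
    set ε := min (M/2) ((β*M - a)/(2*β)) with hεdef
    have hε : 0 < ε := by
      apply lt_min (by linarith)
      apply div_pos (by linarith) (by linarith)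
    have hMε : 0 < M - ε := by
      have := min_le_left (M/2) ((β*M - a)/(2*β))
      simp only [← hεdef] at this; linarith
    have haε : a < β * (M - ε) := by
      have h1 : ε ≤ (β*M - a)/(2*β) := min_le_right _ _
      have h2 : ε * (2*β) ≤ β*M - a := (le_div_iff₀ (by linarith : (0:ℝ) < 2*β)).mp h1
      nlinarith
    -- find interval where u > M - ε/2
    have hcw : ContinuousWithinAt u (Set.Icc 0 t) s₀ := huc s₀ hs₀mem
    rw [Metric.continuousWithinAt_iff] at hcw
    obtain ⟨δ, hδ, hδ2⟩ := hcw (ε/2) (by linarith)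
    set b₀ := min t (s₀ + δ/4) with hb₀def
    set a₀ := max (b₀/2) (b₀ - δ/4) with ha₀def
    have hb₀s : s₀ ≤ b₀ := le_min hs₀mem.2 (by linarith)
    have hb₀pos : 0 < b₀ := lt_min ht0 (by linarith [hs₀mem.1])
    have hb₀t : b₀ ≤ t := min_le_left _ _
    have hb₀δ : b₀ ≤ s₀ + δ/4 := min_le_right _ _
    have ha₀pos : 0 < a₀ := lt_of_lt_of_le (by linarith : (0:ℝ) < b₀/2) (le_max_left _ _)
    have ha₀b : a₀ < b₀ := max_lt (by linarith) (by linarith)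
    have hIcc : Set.Icc a₀ b₀ ⊆ Set.Icc 0 t := Set.Icc_subset_Icc ha₀pos.le hb₀t
    have hdist : ∀ s ∈ Set.Icc a₀ b₀, dist s s₀ < δ := by
      intro s hs
      have h1 : b₀ - δ/4 ≤ a₀ := le_max_right _ _
      have hs1 := hs.1
      have hs2 := hs.2
      rw [Real.dist_eq, abs_lt]
      exact ⟨by linarith, by linarith⟩
    set c := a₀ ^ (n-1) * (b₀ - a₀) with hcdef
    have hc : 0 < c := mul_pos (pow_pos ha₀pos _) (by linarith)
    have hz : Tendsto (fun j => (-lam j) ^ (1/(p j -1)) * ((M - ε) * c ^ (1/(p j -1))))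
        atTop (𝓝 (β * ((M - ε) * 1))) :=
      hlam2.mul (tendsto_const_nhds.mul (hcone c hc))
    rw [mul_one] at hz
    filter_upwards [hz.eventually_const_lt haε, hconv (ε/2) (by linarith)] with j hj1 hj2
    have hujlb : ∀ s ∈ Set.Icc a₀ b₀, M - ε ≤ uj j s := by
      intro s hs
      have hmem := hIcc hs
      have h2 := hj2 s (hsub hmem)
      have h3 := hδ2 hmem (hdist s hs)
      rw [Real.dist_eq, abs_lt] at h2
      rw [Real.dist_eq, ← hM, abs_lt] at h3
      linarith [h2.1, h2.2, h3.1, h3.2]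
    have hintab : IntervalIntegrable (fun s => uj j s ^ (p j - 1) * s ^ (n-1))
        MeasureTheory.volume a₀ b₀ :=
      (hint j).mono_set (by rw [Set.uIcc_of_le ha₀b.le, Set.uIcc_of_le ht0.le]; exact hIcc)
    have hlow : (M - ε) ^ (p j - 1) * c ≤
        ∫ s in a₀..b₀, uj j s ^ (p j - 1) * s ^ (n-1) := by
      have hmono := intervalIntegral.integral_mono_on ha₀b.le
        (intervalIntegrable_const :
          IntervalIntegrable (fun _ => (M - ε) ^ (p j - 1) * a₀ ^ (n-1))
            MeasureTheory.volume a₀ b₀)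
        hintab
        (fun s hs => mul_le_mul (Real.rpow_le_rpow hMε.le (hujlb s hs) (hpe j).le)
          (pow_le_pow_left₀ ha₀pos.le hs.1 _) (pow_nonneg ha₀pos.le _)
          (Real.rpow_nonneg (hujnn j s (hsub (hIcc hs))) _))
      rw [intervalIntegral.integral_const, smul_eq_mul] at hmono
      calc (M - ε) ^ (p j - 1) * c
          = (b₀ - a₀) * ((M - ε) ^ (p j - 1) * a₀ ^ (n-1)) := by rw [hcdef]; ring
        _ ≤ _ := hmono
    have hsplit : ∫ s in a₀..b₀, uj j s ^ (p j - 1) * s ^ (n-1) ≤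
        ∫ s in (0:ℝ)..t, uj j s ^ (p j - 1) * s ^ (n-1) := by
      have i1 : IntervalIntegrable (fun s => uj j s ^ (p j - 1) * s ^ (n-1))
          MeasureTheory.volume 0 a₀ :=
        (hint j).mono_set (by
          rw [Set.uIcc_of_le ha₀pos.le, Set.uIcc_of_le ht0.le]
          exact Set.Icc_subset_Icc le_rfl (ha₀b.le.trans hb₀t))
      have i3 : IntervalIntegrable (fun s => uj j s ^ (p j - 1) * s ^ (n-1))
          MeasureTheory.volume b₀ t :=
        (hint j).mono_set (by
          rw [Set.uIcc_of_le hb₀t, Set.uIcc_of_le ht0.le]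
          exact Set.Icc_subset_Icc hb₀pos.le le_rfl)
      have e1 := intervalIntegral.integral_add_adjacent_intervals hintab i3
      have e2 := intervalIntegral.integral_add_adjacent_intervals i1
        (hintab.trans i3)
      have n1 : 0 ≤ ∫ s in (0:ℝ)..a₀, uj j s ^ (p j - 1) * s ^ (n-1) :=
        intervalIntegral.integral_nonneg ha₀pos.le (fun s hs =>
          hintnn j s ⟨hs.1, hs.2.trans (ha₀b.le.trans hb₀t)⟩)
      have n3 : 0 ≤ ∫ s in b₀..t, uj j s ^ (p j - 1) * s ^ (n-1) :=
        intervalIntegral.integral_nonneg hb₀t (fun s hs =>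
          hintnn j s ⟨hb₀pos.le.trans hs.1, hs.2⟩)
      linarith [e1, e2, n1, n3]
    calc a < (-lam j) ^ (1/(p j -1)) * ((M - ε) * c ^ (1/(p j -1))) := hj1
      _ = ((-lam j) * ((M - ε) ^ (p j -1) * c)) ^ (1/(p j -1)) :=
          (rpow_expand _ _ _ _ (hlamp j).le hMε.le hc.le (hpne j)).symm
      _ ≤ ((-lam j) * ∫ s in (0:ℝ)..t, uj j s ^ (p j - 1) * s ^ (n-1)) ^ (1/(p j -1)) := by
          apply Real.rpow_le_rpow
            (mul_nonneg (hlamp j).le (mul_nonneg (Real.rpow_nonneg hMε.le _) hc.le))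
            _ (he0 j)
          exact mul_le_mul_of_nonneg_left (hlow.trans hsplit) (hlamp j).le
  · -- upper bound: β * M < b
    set ε := (b - β*M)/(2*β) with hεdef
    have hε : 0 < ε := div_pos (by linarith) (by linarith)
    have hβMε : β * (M + ε) < b := by
      have : β * ε = (b - β*M)/2 := by rw [hεdef]; field_simp
      nlinarith
    have hz : Tendsto (fun j => (-lam j) ^ (1/(p j -1)) * ((M + ε) * C ^ (1/(p j -1))))
        atTop (𝓝 (β * ((M + ε) * 1))) :=
      hlam2.mul (tendsto_const_nhds.mul (hcone C hC))
    rw [mul_one] at hz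
    have hev := hz.eventually_lt_const hβMε
    filter_upwards [hev, hconv ε hε] with j hj1 hj2
    refine lt_of_le_of_lt ?_ hj1
    have hbound : ∀ s ∈ Set.Icc (0:ℝ) t, uj j s ^ (p j - 1) * s ^ (n - 1) ≤
        (M + ε) ^ (p j - 1) * s ^ (n - 1) := by
      intro s hs
      apply mul_le_mul_of_nonneg_right _ (pow_nonneg hs.1 _)
      apply Real.rpow_le_rpow (hujnn j s (hsub hs)) _ (hpe j).le
      have := hj2 s (hsub hs)
      rw [Real.dist_eq, abs_lt] at this
      have := hub s hs
      linarith [this]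
    have hint2 : ∫ s in (0:ℝ)..t, uj j s ^ (p j - 1) * s ^ (n - 1) ≤
        (M + ε) ^ (p j - 1) * C := by
      rw [hCdef, ← intervalIntegral.integral_const_mul]
      exact intervalIntegral.integral_mono_on ht0.le (hint j)
        (((continuous_const).mul (continuous_pow _)).intervalIntegrable _ _) hbound
    calc ((-lam j) * ∫ s in (0:ℝ)..t, uj j s ^ (p j - 1) * s ^ (n - 1)) ^ (1/(p j -1))
        ≤ ((-lam j) * ((M + ε) ^ (p j - 1) * C)) ^ (1/(p j -1)) := by
          apply Real.rpow_le_rpow (hA j) _ (he0 j)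
          exact mul_le_mul_of_nonneg_left hint2 (hlamp j).le
      _ = (-lam j) ^ (1/(p j -1)) * ((M + ε) * C ^ (1/(p j -1))) :=
          rpow_expand _ _ _ _ (hlamp j).le (by linarith) hC.le (hpne j)
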